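/- arXiv:0909.3901 — 7 statements merged into one kernel-verified Lean document; each statement's English description precedes it below -/
import Mathlib

section
/- For any real number x, any positive integer l, and any l×l real matrix A, the sum of det(xI + ĪA) over all diagonal sign matrices Ī with an even number of −1 entries equals 2^{l−1}(x^l + det A). -/
open Finset Matrix

/-- A diagonal sign matrix determined by a choice `s : Fin l → Bool`
(`true` means diagonal entry `-1`). -/
def signMatrix (l : ℕ) (s : Fin l → Bool) : Matrix (Fin l) (Fin l) ℝ :=
  Matrix.diagonal (fun i => if s i then (-1 : ℝ) else 1)

/-- Auxiliary matrix: rows in `t` from `A`, other rows from the identity. -/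
def auxB (l : ℕ) (A : Matrix (Fin l) (Fin l) ℝ) (t : Finset (Fin l)) :
    Matrix (Fin l) (Fin l) ℝ :=
  Matrix.of fun i j => if i ∈ t then A i j else (1 : Matrix (Fin l) (Fin l) ℝ) i j

lemma det_expand (l : ℕ) (x : ℝ) (A : Matrix (Fin l) (Fin l) ℝ) (s : Fin l → Bool) :
    (x • (1 : Matrix (Fin l) (Fin l) ℝ) + signMatrix l s * A).det
      = ∑ t : Finset (Fin l),
          (∏ i ∈ t, (if s i then (-1 : ℝ) else 1)) * x ^ (l - t.card) * (auxB l A t).det := by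
  classical
  set f : MultilinearMap ℝ (fun _ : Fin l => Fin l → ℝ) ℝ :=
    (Matrix.detRowAlternating : (Fin l → ℝ) [⋀^Fin l]→ₗ[ℝ] ℝ).toMultilinearMap with hf
  have hrow : (x • (1 : Matrix (Fin l) (Fin l) ℝ) + signMatrix l s * A)
      = (fun i => (if s i then (-1 : ℝ) else 1) • A i)
        + (fun i => x • (1 : Matrix (Fin l) (Fin l) ℝ) i) := by
    ext i j
    by_cases h : s i <;>
      simp [signMatrix, Matrix.diagonal_mul, h] <;> ring
  have h1 : (x • (1 : Matrix (Fin l) (Fin l) ℝ) + signMatrix l s * A).det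
      = f ((fun i => (if s i then (-1 : ℝ) else 1) • A i)
          + (fun i => x • (1 : Matrix (Fin l) (Fin l) ℝ) i)) := by
    rw [← hrow]; rfl
  rw [h1, f.map_add_univ]
  apply Finset.sum_congr rfl
  intro t _
  have hpc : t.piecewise (fun i => (if s i then (-1 : ℝ) else 1) • A i)
      (fun i => x • (1 : Matrix (Fin l) (Fin l) ℝ) i)
      = fun i => (if i ∈ t then (if s i then (-1 : ℝ) else 1) else x) • (auxB l A t i) := by
    funext i
    funext j
    by_cases h : i ∈ t <;> by_cases hs : s i <;>
      simp [Finset.piecewise, h, hs, auxB]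
  rw [hpc]
  refine (f.map_smul_univ (fun i => if i ∈ t then (if s i then (-1 : ℝ) else 1) else x)
    (fun i => (auxB l A t i : Fin l → ℝ))).trans ?_
  have hprod : (∏ i, (if i ∈ t then (if s i then (-1 : ℝ) else 1) else x))
      = (∏ i ∈ t, (if s i then (-1 : ℝ) else 1)) * x ^ (l - t.card) := by
    rw [← Finset.prod_mul_prod_compl t]
    congr 1
    · exact Finset.prod_congr rfl fun i hi => by simp [hi]
    · have h1 : ∏ i ∈ tᶜ, (if i ∈ t then (if s i then (-1 : ℝ) else 1) else x)
          = ∏ _i ∈ tᶜ, x := by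
        apply Finset.prod_congr rfl
        intro i hi
        simp only [Finset.mem_compl] at hi
        simp [hi]
      rw [h1, Finset.prod_const, Finset.card_compl, Fintype.card_fin]
  rw [hprod, smul_eq_mul]
  rfl

lemma sum_prod_signs (l : ℕ) (t : Finset (Fin l)) :
    ∑ s : Fin l → Bool, ∏ i ∈ t, (if s i then (-1 : ℝ) else 1)
      = if t = ∅ then (2 : ℝ) ^ l else 0 := by
  classical
  have h : ∀ s : Fin l → Bool, (∏ i ∈ t, (if s i then (-1 : ℝ) else 1))
      = ∏ i, (if i ∈ t then (if s i then (-1 : ℝ) else 1) else 1) := by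
    intro s
    rw [Fintype.prod_ite_mem t (fun i => if s i then (-1 : ℝ) else 1)]
  simp only [h]
  rw [← Fintype.prod_sum (fun i (b : Bool) => (if i ∈ t then (if b then (-1 : ℝ) else 1) else 1))]
  by_cases ht : t = ∅
  · simp [ht]
  · obtain ⟨i, hi⟩ := Finset.nonempty_iff_ne_empty.mpr ht
    rw [if_neg ht]
    apply Finset.prod_eq_zero (Finset.mem_univ i)
    simp [hi]

lemma parity_prod (l : ℕ) (s : Fin l → Bool) :
    (∏ i, (if s i then (-1 : ℝ) else 1))
      = (-1 : ℝ) ^ ((Finset.univ.filter (fun i => s i = true)).card) := by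
  classical
  rw [← Finset.prod_filter_mul_prod_filter_not Finset.univ (fun i => s i = true)
    (fun i => if s i then (-1 : ℝ) else 1)]
  have h1 : ∏ i ∈ Finset.univ.filter (fun i => s i = true), (if s i then (-1 : ℝ) else 1)
      = (-1 : ℝ) ^ ((Finset.univ.filter (fun i => s i = true)).card) := by
    rw [← Finset.prod_const]
    apply Finset.prod_congr rfl
    intro i hi
    simp only [Finset.mem_filter] at hi
    simp [hi.2]
  have h2 : ∏ i ∈ Finset.univ.filter (fun i => ¬ s i = true), (if s i then (-1 : ℝ) else 1)
      = 1 := by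
    apply Finset.prod_eq_one
    intro i hi
    simp only [Finset.mem_filter] at hi
    simp [hi.2]
  rw [h1, h2, mul_one]

lemma coeff_sum (l : ℕ) (hl : 1 ≤ l) (t : Finset (Fin l)) :
    ∑ s ∈ Finset.univ.filter
        (fun s : Fin l → Bool => Even ((Finset.univ.filter (fun i => s i = true)).card)),
      ∏ i ∈ t, (if s i then (-1 : ℝ) else 1)
      = (if t = ∅ then (2 : ℝ) ^ (l - 1) else 0)
        + (if t = Finset.univ then (2 : ℝ) ^ (l - 1) else 0) := by
  classical
  set P := fun s : Fin l → Bool => Even ((Finset.univ.filter (fun i => s i = true)).card) with hP'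
  have key : (2 : ℝ) * ∑ s ∈ Finset.univ.filter P, ∏ i ∈ t, (if s i then (-1 : ℝ) else 1)
      = (∑ s : Fin l → Bool, ∏ i ∈ t, (if s i then (-1 : ℝ) else 1))
        + ∑ s : Fin l → Bool, ∏ i ∈ tᶜ, (if s i then (-1 : ℝ) else 1) := by
    have hsplit : ∀ s : Fin l → Bool,
        (∏ i ∈ t, (if s i then (-1 : ℝ) else 1)) + ∏ i ∈ tᶜ, (if s i then (-1 : ℝ) else 1)
        = (1 + (-1 : ℝ) ^ ((Finset.univ.filter (fun i => s i = true)).card))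
            * ∏ i ∈ t, (if s i then (-1 : ℝ) else 1) := by
      intro s
      have h2 : (∏ i ∈ t, (if s i then (-1 : ℝ) else 1))
          * ∏ i ∈ t, (if s i then (-1 : ℝ) else 1) = 1 := by
        rw [← Finset.prod_mul_distrib]
        apply Finset.prod_eq_one
        intro i _
        by_cases h : s i <;> simp [h]
      have h3 : (∏ i ∈ t, (if s i then (-1 : ℝ) else 1))
          * ∏ i ∈ tᶜ, (if s i then (-1 : ℝ) else 1)
          = (-1 : ℝ) ^ ((Finset.univ.filter (fun i => s i = true)).card) := by
        rw [Finset.prod_mul_prod_compl, parity_prod]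
      linear_combination (-(∏ i ∈ tᶜ, (if s i then (-1 : ℝ) else 1))) * h2
        + (∏ i ∈ t, (if s i then (-1 : ℝ) else 1)) * h3
    rw [← Finset.sum_add_distrib]
    simp only [hsplit]
    rw [← Finset.sum_filter_add_sum_filter_not Finset.univ P]
    have hPside : ∑ s ∈ Finset.univ.filter P,
        (1 + (-1 : ℝ) ^ ((Finset.univ.filter (fun i => s i = true)).card))
          * ∏ i ∈ t, (if s i then (-1 : ℝ) else 1)
        = 2 * ∑ s ∈ Finset.univ.filter P, ∏ i ∈ t, (if s i then (-1 : ℝ) else 1) := by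
      rw [Finset.mul_sum]
      apply Finset.sum_congr rfl
      intro s hs
      simp only [Finset.mem_filter] at hs
      rw [(hs.2 : P s).neg_one_pow]
      ring
    have hnP : ∑ s ∈ Finset.univ.filter (fun s => ¬ P s),
        (1 + (-1 : ℝ) ^ ((Finset.univ.filter (fun i => s i = true)).card))
          * ∏ i ∈ t, (if s i then (-1 : ℝ) else 1) = 0 := by
      apply Finset.sum_eq_zero
      intro s hs
      simp only [Finset.mem_filter] at hs
      have hodd : Odd ((Finset.univ.filter (fun i => s i = true)).card) :=
        Nat.not_even_iff_odd.mp hs.2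
      rw [hodd.neg_one_pow]
      ring
    rw [hPside, hnP, add_zero]
  rw [sum_prod_signs, sum_prod_signs] at key
  have htc : (tᶜ = ∅) ↔ (t = Finset.univ) := by
    constructor
    · intro h; rw [← compl_compl t, h, compl_empty]
    · intro h; rw [h, compl_univ]
  have hne : ¬ (t = ∅ ∧ t = Finset.univ) := by
    rintro ⟨h1, h2⟩
    have hnonempty : Nonempty (Fin l) := ⟨⟨0, hl⟩⟩
    have : (Finset.univ : Finset (Fin l)).Nonempty := Finset.univ_nonempty
    rw [← h2, h1] at this
    exact Finset.not_nonempty_empty this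
  have h2l : (2 : ℝ) ^ l = 2 * 2 ^ (l - 1) := by
    conv_lhs => rw [← Nat.sub_add_cancel hl]
    rw [pow_succ']
  have h2 : (2 : ℝ) ≠ 0 := two_ne_zero
  by_cases h0 : t = ∅
  · have hc : tᶜ ≠ ∅ := fun h => hne ⟨h0, htc.mp h⟩
    rw [if_pos h0, if_neg hc, add_zero, h2l] at key
    rw [if_pos h0, if_neg (fun h => hne ⟨h0, h⟩), add_zero]
    exact mul_left_cancel₀ h2 key
  · by_cases h1 : t = Finset.univ
    · rw [if_neg h0, if_pos (htc.mpr h1), zero_add, h2l] at key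
      rw [if_neg h0, if_pos h1, zero_add]
      exact mul_left_cancel₀ h2 key
    · rw [if_neg h0, if_neg (fun h => h1 (htc.mp h)), add_zero] at key
      rw [if_neg h0, if_neg h1, add_zero]
      exact mul_left_cancel₀ h2 (key.trans (mul_zero (2:ℝ)).symm)

/-- The sum of `det (x I + Ī A)` over all diagonal sign matrices `Ī`
with an even number of `-1` diagonal entries equals `2^(l-1) (x^l + det A)`. -/
theorem sum_det_even_sign_matrices (l : ℕ) (hl : 1 ≤ l) (x : ℝ)
    (A : Matrix (Fin l) (Fin l) ℝ) :
    ∑ s ∈ Finset.univ.filter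
        (fun s : Fin l → Bool => Even ((Finset.univ.filter (fun i => s i = true)).card)),
      (x • (1 : Matrix (Fin l) (Fin l) ℝ) + signMatrix l s * A).det
      = 2 ^ (l - 1) * (x ^ l + A.det) := by
  classical
  simp only [det_expand]
  rw [Finset.sum_comm]
  have hterm : ∀ t : Finset (Fin l), ∑ s ∈ Finset.univ.filter
        (fun s : Fin l → Bool => Even ((Finset.univ.filter (fun i => s i = true)).card)),
      (∏ i ∈ t, (if s i then (-1 : ℝ) else 1)) * x ^ (l - t.card) * (auxB l A t).det
      = ((if t = ∅ then (2 : ℝ) ^ (l - 1) else 0)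
          + (if t = Finset.univ then (2 : ℝ) ^ (l - 1) else 0))
        * (x ^ (l - t.card) * (auxB l A t).det) := by
    intro t
    rw [← coeff_sum l hl t]
    rw [show (∑ s ∈ Finset.univ.filter
        (fun s : Fin l → Bool => Even ((Finset.univ.filter (fun i => s i = true)).card)),
      (∏ i ∈ t, (if s i then (-1 : ℝ) else 1)) * x ^ (l - t.card) * (auxB l A t).det)
      = ∑ s ∈ Finset.univ.filter
        (fun s : Fin l → Bool => Even ((Finset.univ.filter (fun i => s i = true)).card)),
      (∏ i ∈ t, (if s i then (-1 : ℝ) else 1)) * (x ^ (l - t.card) * (auxB l A t).det)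
      from Finset.sum_congr rfl fun s _ => by ring]
    rw [← Finset.sum_mul]
  simp only [hterm, add_mul, Finset.sum_add_distrib, ite_mul, zero_mul]
  rw [Finset.sum_ite_eq' Finset.univ (∅ : Finset (Fin l)),
    Finset.sum_ite_eq' Finset.univ (Finset.univ : Finset (Fin l))]
  have hB0 : auxB l A ∅ = 1 := by ext i j; simp [auxB]
  have hBu : auxB l A Finset.univ = A := by ext i j; simp [auxB]
  simp [hB0, hBu, Nat.sub_self]
  ring
end

section
/- For any real number x, any positive integer l, and any l×l real matrix A, the sum of det(xI + ĪA) over all diagonal sign matrices Ī with an odd number of −1 entries equals 2^{l−1}(x^l − det A). -/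
open Finset Matrix

/-- The sum of `det (x I + Ī A)` over all diagonal sign matrices `Ī`
with an odd number of `-1` diagonal entries equals `2^(l-1) (x^l - det A)`. -/
theorem sum_det_odd_sign_matrices (l : ℕ) (hl : 1 ≤ l) (x : ℝ)
    (A : Matrix (Fin l) (Fin l) ℝ) :
    ∑ s ∈ Finset.univ.filter
        (fun s : Fin l → Bool => Odd ((Finset.univ.filter (fun i => s i = true)).card)),
      (x • (1 : Matrix (Fin l) (Fin l) ℝ) + signMatrix l s * A).det
      = 2 ^ (l - 1) * (x ^ l - A.det) := by
  classical
  set f : MultilinearMap ℝ (fun _ : Fin l => Fin l → ℝ) ℝ :=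
    (Matrix.detRowAlternating : (Fin l → ℝ) [⋀^Fin l]→ₗ[ℝ] ℝ).toMultilinearMap
    with hf
  -- rows
  set e : Fin l → Fin l → ℝ := fun i => (1 : Matrix (Fin l) (Fin l) ℝ) i with he
  set T : (Fin l → Bool) → ℝ :=
    fun s => (x • (1 : Matrix (Fin l) (Fin l) ℝ) + signMatrix l s * A).det with hT
  set g : Fin l → Bool → (Fin l → ℝ) :=
    fun i b => x • e i + (if b then (-1:ℝ) else 1) • A i with hg
  have hrow : ∀ s : Fin l → Bool, T s = f (fun i => g i (s i)) := by
    intro s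
    have : (x • (1 : Matrix (Fin l) (Fin l) ℝ) + signMatrix l s * A) =
        (fun i => g i (s i) : Matrix (Fin l) (Fin l) ℝ) := by
      ext i j
      simp [hg, he, signMatrix, Matrix.mul_apply, Matrix.diagonal, Matrix.one_apply,
        mul_comm]
      by_cases h : s i <;> by_cases h2 : i = j <;> simp [h, h2] <;> split_ifs <;> simp
    rw [hT]
    simp only [this]
    rfl
  -- sum over all s
  have h1 : ∑ s : Fin l → Bool, T s = (2 * x) ^ l := by
    have := (f.map_sum g).symm
    have hsum : (fun i => ∑ b : Bool, g i b) = fun i => (2 * x) • e i := by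
      funext i
      simp only [Fintype.sum_bool, hg]
      ext j
      simp [two_mul]
      ring
    calc ∑ s : Fin l → Bool, T s = ∑ s : Fin l → Bool, f (fun i => g i (s i)) := by
          simp only [hrow]
      _ = f (fun i => ∑ b : Bool, g i b) := this
      _ = f (fun i => (2 * x) • e i) := by rw [hsum]
      _ = (∏ _i : Fin l, (2 * x)) • f e := f.map_smul_univ (fun _ => 2 * x) e
      _ = (2 * x) ^ l := by
          have : f e = 1 := by
            show (Matrix.detRowAlternating (1 : Matrix (Fin l) (Fin l) ℝ) : ℝ) = 1
            exact Matrix.det_one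
          simp [this]
  -- signed sum
  set P : (Fin l → Bool) → ℝ := fun s => ∏ i, (if s i then (-1:ℝ) else 1) with hP
  set h : Fin l → Bool → (Fin l → ℝ) :=
    fun i b => (if b then (-x:ℝ) else x) • e i + A i with hh
  have hsign : ∀ s : Fin l → Bool, P s * T s = f (fun i => h i (s i)) := by
    intro s
    rw [hrow s, hP]
    have : ∀ i, h i (s i) = (if s i then (-1:ℝ) else 1) • g i (s i) := by
      intro i
      by_cases hs : s i <;> ext j <;> simp [hh, hg, hs] <;> ring
    simp only [this]
    rw [f.map_smul_univ (fun i => if s i then (-1:ℝ) else 1) (fun i => g i (s i))]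
    simp [mul_comm]
  have h2 : ∑ s : Fin l → Bool, P s * T s = 2 ^ l * A.det := by
    have := (f.map_sum h).symm
    have hsum : (fun i => ∑ b : Bool, h i b) = fun i => (2 : ℝ) • A i := by
      funext i
      simp only [Fintype.sum_bool, hh]
      ext j
      simp [two_mul]
      ring
    calc ∑ s : Fin l → Bool, P s * T s = ∑ s : Fin l → Bool, f (fun i => h i (s i)) := by
          simp only [hsign]
      _ = f (fun i => ∑ b : Bool, h i b) := this
      _ = f (fun i => (2:ℝ) • A i) := by rw [hsum]
      _ = (∏ _i : Fin l, (2:ℝ)) • f (fun i => A i) := f.map_smul_univ (fun _ => (2:ℝ)) _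
      _ = 2 ^ l * A.det := by
          have : f (fun i => A i) = A.det := rfl
          simp [this]
  -- P s = (-1)^(number of trues)
  have hPval : ∀ s : Fin l → Bool,
      P s = (-1 : ℝ) ^ ((Finset.univ.filter (fun i => s i = true)).card) := by
    intro s
    simp only [hP]
    rw [Finset.prod_ite (f := fun _ => (-1:ℝ)) (g := fun _ => (1:ℝ))]
    simp
  -- combine
  set odd : (Fin l → Bool) → Prop :=
    fun s => Odd ((Finset.univ.filter (fun i => s i = true)).card) with hodd
  have key : ∑ s : Fin l → Bool, (T s - P s * T s)
      = 2 * ∑ s ∈ Finset.univ.filter odd, T s := by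
    rw [← Finset.sum_filter_add_sum_filter_not Finset.univ odd]
    have hA : ∀ s ∈ Finset.univ.filter odd, T s - P s * T s = 2 * T s := by
      intro s hs
      have : P s = -1 := by
        rw [hPval s]
        exact Odd.neg_one_pow (Finset.mem_filter.mp hs).2
      rw [this]; ring
    have hB : ∀ s ∈ Finset.univ.filter (fun s => ¬ odd s), T s - P s * T s = 0 := by
      intro s hs
      have : P s = 1 := by
        rw [hPval s]
        exact Even.neg_one_pow (Nat.not_odd_iff_even.mp (Finset.mem_filter.mp hs).2)
      rw [this]; ring
    rw [Finset.sum_congr rfl hA, Finset.sum_congr rfl hB]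
    rw [Finset.mul_sum]
    simp
  have hsub : ∑ s : Fin l → Bool, (T s - P s * T s) = (2*x)^l - 2^l * A.det := by
    rw [Finset.sum_sub_distrib, h1, h2]
  have h2l : (2:ℝ) ^ l = 2 * 2 ^ (l - 1) := by
    rw [← pow_succ']
    congr 1
    omega
  have : 2 * ∑ s ∈ Finset.univ.filter odd, T s = 2 * (2 ^ (l-1) * (x ^ l - A.det)) := by
    rw [← key, hsub, mul_pow, h2l]; ring
  have hfin := mul_left_cancel₀ (two_ne_zero) this
  exact hfin
end

section
/- Let A be an l×l real matrix such that det(I + ĪA) ≥ 0 for every l×l diagonal matrix Ī whose diagonal entries are ±1. Then |det A| ≤ 1. -/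
open Finset Matrix

private lemma row_expand (l : ℕ) (A : Matrix (Fin l) (Fin l) ℝ) (c : Fin l → ℝ) :
    ((1 : Matrix (Fin l) (Fin l) ℝ) + Matrix.diagonal c * A).det
      = ∑ r : Fin l → Bool,
          (∏ i, if r i then c i else 1) *
            (Matrix.of (fun i => if r i then A i else (1 : Matrix (Fin l) (Fin l) ℝ) i)).det := by
  set g : Fin l → Bool → (Fin l → ℝ) :=
    fun i b => if b then c i • A i else (1 : Matrix (Fin l) (Fin l) ℝ) i with hg
  have hrow : (fun i => ((1 : Matrix (Fin l) (Fin l) ℝ) + Matrix.diagonal c * A) i)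
      = fun i => ∑ b : Bool, g i b := by
    funext i
    rw [Fintype.sum_bool]
    funext j
    simp [hg, Matrix.add_apply, Matrix.mul_apply, Matrix.diagonal, Matrix.one_apply, mul_comm]
    ring
  have hsum := (Matrix.detRowAlternating (R := ℝ) (n := Fin l)).toMultilinearMap.map_sum
    (g := g)
  have hL : ((1 : Matrix (Fin l) (Fin l) ℝ) + Matrix.diagonal c * A).det
      = (Matrix.detRowAlternating (R := ℝ) (n := Fin l)).toMultilinearMap
          (fun i => ∑ b : Bool, g i b) := by
    rw [← hrow]
    rfl
  rw [hL, hsum]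
  refine Finset.sum_congr rfl fun r _ => ?_
  have e : (fun i => g i (r i))
      = fun i => (if r i then c i else 1) •
          (if r i then A i else (1 : Matrix (Fin l) (Fin l) ℝ) i) := by
    funext i
    by_cases hb : r i <;> simp [hg, hb]
  rw [e, (Matrix.detRowAlternating (R := ℝ) (n := Fin l)).toMultilinearMap.map_smul_univ]
  rfl

/-- If `det (I + Ī A) ≥ 0` for every diagonal sign matrix `Ī`
(diagonal entries `±1`), then `|det A| ≤ 1`. -/
theorem abs_det_le_one_of_sign_dets_nonneg (l : ℕ) (hl : 1 ≤ l)
    (A : Matrix (Fin l) (Fin l) ℝ)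
    (h : ∀ s : Fin l → Bool,
      0 ≤ ((1 : Matrix (Fin l) (Fin l) ℝ) +
        Matrix.diagonal (fun i => if s i then (-1 : ℝ) else 1) * A).det) :
    |A.det| ≤ 1 := by
  set D := fun r : Fin l → Bool =>
    (Matrix.of (fun i => if r i then A i else (1 : Matrix (Fin l) (Fin l) ℝ) i)).det with hD
  set f := fun s : Fin l → Bool =>
    ((1 : Matrix (Fin l) (Fin l) ℝ) +
      Matrix.diagonal (fun i => if s i then (-1 : ℝ) else 1) * A).det with hf
  have hexp : ∀ s : Fin l → Bool, f s
      = ∑ r : Fin l → Bool, (∏ i, if r i then (if s i then (-1:ℝ) else 1) else 1) * D r :=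
    fun s => row_expand l A _
  have hDtrue : D (fun _ => true) = A.det := by
    show (Matrix.of fun i => if (true : Bool) = true then A i
        else (1 : Matrix (Fin l) (Fin l) ℝ) i).det = A.det
    have e : (Matrix.of fun i => if (true : Bool) = true then A i
        else (1 : Matrix (Fin l) (Fin l) ℝ) i) = A := by ext i j; simp
    rw [e]
  have hDfalse : D (fun _ => false) = 1 := by
    show (Matrix.of fun i => if (false : Bool) = true then A i
        else (1 : Matrix (Fin l) (Fin l) ℝ) i).det = 1
    have e : (Matrix.of fun i => if (false : Bool) = true then A i
        else (1 : Matrix (Fin l) (Fin l) ℝ) i) = (1 : Matrix (Fin l) (Fin l) ℝ) := by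
      ext i j; simp
    rw [e, Matrix.det_one]
  -- Sum 1 : ∑ s, f s = 2^l
  have hS1 : ∑ s : Fin l → Bool, f s = (2:ℝ)^l := by
    rw [Finset.sum_congr rfl fun s _ => hexp s, Finset.sum_comm]
    have key : ∀ r : Fin l → Bool,
        (∑ s : Fin l → Bool, ∏ i, if r i then (if s i then (-1:ℝ) else 1) else 1)
          = if r = (fun _ => false) then (2:ℝ)^l else 0 := by
      intro r
      rw [← Fintype.prod_sum
        (fun (i : Fin l) (b : Bool) => if r i then (if b = true then (-1:ℝ) else 1) else 1)]
      by_cases hr : r = fun _ => false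
      · subst hr; simp
      · have : ∃ i, r i = true := by
          by_contra hc
          push_neg at hc
          exact hr (funext fun i => by simpa using hc i)
        obtain ⟨i, hi⟩ := this
        rw [if_neg hr]
        apply Finset.prod_eq_zero (Finset.mem_univ i)
        simp [hi]
    calc ∑ r : Fin l → Bool,
          ∑ s : Fin l → Bool, (∏ i, if r i then (if s i then (-1:ℝ) else 1) else 1) * D r
        = ∑ r : Fin l → Bool,
          (if r = (fun _ => false) then (2:ℝ)^l else 0) * D r := by
          refine Finset.sum_congr rfl fun r _ => ?_
          rw [← Finset.sum_mul, key r]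
      _ = (2:ℝ)^l := by
          rw [Finset.sum_eq_single (fun _ : Fin l => false)]
          · simp [hDfalse]
          · intro r _ hr; simp [hr]
          · intro habs; exact absurd (Finset.mem_univ _) habs
  -- Sum 2 : ∑ s, (∏ i, sgn (s i)) * f s = 2^l * A.det
  have hS2 : ∑ s : Fin l → Bool, (∏ i, if s i then (-1:ℝ) else 1) * f s
      = (2:ℝ)^l * A.det := by
    have step : ∀ s : Fin l → Bool, (∏ i, if s i then (-1:ℝ) else 1) * f s
        = ∑ r : Fin l → Bool,
            (∏ i, (if s i then (-1:ℝ) else 1) *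
              (if r i then (if s i then (-1:ℝ) else 1) else 1)) * D r := by
      intro s
      rw [hexp s, Finset.mul_sum]
      refine Finset.sum_congr rfl fun r _ => ?_
      rw [← mul_assoc, ← Finset.prod_mul_distrib]
    rw [Finset.sum_congr rfl fun s _ => step s, Finset.sum_comm]
    have key : ∀ r : Fin l → Bool,
        (∑ s : Fin l → Bool, ∏ i, (if s i then (-1:ℝ) else 1) *
            (if r i then (if s i then (-1:ℝ) else 1) else 1))
          = if r = (fun _ => true) then (2:ℝ)^l else 0 := by
      intro r
      rw [← Fintype.prod_sum (fun (i : Fin l) (b : Bool) => (if b = true then (-1:ℝ) else 1) *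
            (if r i then (if b = true then (-1:ℝ) else 1) else 1))]
      by_cases hr : r = fun _ => true
      · subst hr; norm_num
      · have : ∃ i, r i = false := by
          by_contra hc
          push_neg at hc
          exact hr (funext fun i => by simpa using hc i)
        obtain ⟨i, hi⟩ := this
        rw [if_neg hr]
        apply Finset.prod_eq_zero (Finset.mem_univ i)
        simp [hi]
    calc ∑ r : Fin l → Bool,
          ∑ s : Fin l → Bool, (∏ i, (if s i then (-1:ℝ) else 1) *
            (if r i then (if s i then (-1:ℝ) else 1) else 1)) * D r
        = ∑ r : Fin l → Bool,
          (if r = (fun _ => true) then (2:ℝ)^l else 0) * D r := by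
          refine Finset.sum_congr rfl fun r _ => ?_
          rw [← Finset.sum_mul, key r]
      _ = (2:ℝ)^l * A.det := by
          rw [Finset.sum_eq_single (fun _ : Fin l => true)]
          · simp [hDtrue]
          · intro r _ hr; simp [hr]
          · intro habs; exact absurd (Finset.mem_univ _) habs
  -- triangle inequality
  have habs : |(2:ℝ)^l * A.det| ≤ (2:ℝ)^l := by
    rw [← hS2, ← hS1]
    refine le_trans (Finset.abs_sum_le_sum_abs _ _) ?_
    refine Finset.sum_le_sum fun s _ => ?_
    rw [abs_mul]
    have h1 : |∏ i, if s i then (-1:ℝ) else 1| = 1 := by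
      rw [Finset.abs_prod]
      refine Finset.prod_eq_one fun i _ => ?_
      by_cases hb : s i <;> simp [hb]
    rw [h1, one_mul, abs_of_nonneg (h s)]
  have h2pos : (0:ℝ) < (2:ℝ)^l := by positivity
  rw [abs_mul, abs_of_pos h2pos] at habs
  have habs' : (2:ℝ)^l * |A.det| ≤ (2:ℝ)^l * 1 := by linarith
  exact (mul_le_mul_iff_right₀ h2pos).mp habs'
end

section
/- Let m > l ≥ 1 be integers and Q = (q_{ij}) an m×l real matrix satisfying, for each column j = 1,…,l, the condition q_{jj} > ∑_{i ≠ j} |q_{ij}| (the sum over all rows i ≠ j). Then the determinant of the l×l submatrix S₁ formed by the first l rows of Q is nonnegative and has the largest absolute value among determinants of all l×l submatrices of Q: det S₁ = max_S |det S|, where S ranges over all l×l submatrices of Q obtained by selecting l rows. -/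
open Finset Matrix

private theorem aux : ∀ (l m : ℕ) (hml : l + 1 < m) (Q : Matrix (Fin m) (Fin (l+1)) ℝ),
    (∀ j : Fin (l+1),
      ∑ i ∈ Finset.univ.erase (Fin.castLE hml.le j), |Q i j| < Q (Fin.castLE hml.le j) j) →
    0 < (Q.submatrix (Fin.castLE hml.le) id).det ∧
    ∀ ρ : Fin (l+1) → Fin m, StrictMono ρ →
      |(Q.submatrix ρ id).det| ≤ (Q.submatrix (Fin.castLE hml.le) id).det := by
  intro l
  induction l with
  | zero =>
    intro m hml Q hQ
    have h0 := hQ 0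
    have hpos : 0 < Q (Fin.castLE hml.le 0) 0 :=
      lt_of_le_of_lt (Finset.sum_nonneg fun i _ => abs_nonneg _) h0
    constructor
    · simpa [Matrix.det_fin_one] using hpos
    · intro ρ hρ
      rw [show (Q.submatrix ρ id).det = Q (ρ 0) 0 from Matrix.det_fin_one _,
          show (Q.submatrix (Fin.castLE hml.le) id).det = Q (Fin.castLE hml.le 0) 0 from
            Matrix.det_fin_one _]
      by_cases h : ρ 0 = Fin.castLE hml.le 0
      · rw [h, abs_of_pos hpos]
      · have hmem : ρ 0 ∈ Finset.univ.erase (Fin.castLE hml.le 0) :=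
          Finset.mem_erase.2 ⟨h, Finset.mem_univ _⟩
        exact le_of_lt (lt_of_le_of_lt
          (Finset.single_le_sum (f := fun i => |Q i 0|) (fun i _ => abs_nonneg _) hmem) h0)
  | succ l IH =>
    intro m hml Q hQ
    obtain ⟨n, rfl⟩ : ∃ n, m = n + 1 := ⟨m - 1, by omega⟩
    have hn : l + 1 < n := by omega
    set c : Fin (l+2) → Fin (n+1) := Fin.castLE hml.le with hc
    have hc0 : c 0 = 0 := rfl
    have hS0 : ∑ i ∈ Finset.univ.erase (0 : Fin (n+1)), |Q i 0| < Q 0 0 := by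
      simpa [hc0] using hQ 0
    have h00 : 0 < Q 0 0 :=
      lt_of_le_of_lt (Finset.sum_nonneg fun i _ => abs_nonneg _) hS0
    -- the column-reduced matrix
    set Qt : Matrix (Fin (n+1)) (Fin (l+2)) ℝ :=
      fun i j => if j = 0 then Q i 0 else Q i j - Q 0 j / Q 0 0 * Q i 0 with hQt_def
    -- column operation matrix
    set E : Matrix (Fin (l+2)) (Fin (l+2)) ℝ :=
      fun k j => if k = j then 1 else if k = 0 then -(Q 0 j / Q 0 0) else 0 with hE_def
    have hdetE : E.det = 1 := by
      rw [Matrix.det_of_upperTriangular]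
      · simp [hE_def]
      · intro i j hij
        simp only [id] at hij
        have h1 : i ≠ j := ne_of_gt hij
        have h2 : i ≠ 0 := by
          intro h; subst h; exact absurd hij (by simp)
        simp [hE_def, h1, h2]
    have hmulE : ∀ (ρ : Fin (l+2) → Fin (n+1)),
        Qt.submatrix ρ id = (Q.submatrix ρ id) * E := by
      intro ρ
      ext i j
      rw [Matrix.mul_apply]
      by_cases hj : j = 0
      · subst hj
        rw [Finset.sum_eq_single_of_mem 0 (Finset.mem_univ _) (fun b _ hb => by
          simp [hE_def, hb])]
        simp only [submatrix_apply]
        simp [hQt_def, hE_def]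
      · rw [Finset.sum_eq_add_of_mem j 0 (Finset.mem_univ _) (Finset.mem_univ _) hj
          (fun k _ hk => by simp [hE_def, hk.1, hk.2])]
        simp only [submatrix_apply]
        simp only [hQt_def, hE_def, submatrix_apply, id_eq, if_neg hj, if_pos rfl,
          if_neg (Ne.symm hj), if_true]
        ring
    have hdet : ∀ (ρ : Fin (l+2) → Fin (n+1)),
        (Qt.submatrix ρ id).det = (Q.submatrix ρ id).det := by
      intro ρ; rw [hmulE, Matrix.det_mul, hdetE, mul_one]
    -- the reduced dominance condition
    have hQt0 : ∀ j : Fin (l+2), j ≠ 0 → Qt 0 j = 0 := by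
      intro j hj
      simp only [hQt_def, if_neg hj]
      field_simp
      ring
    have hQtdom : ∀ j : Fin (l+2),
        ∑ i ∈ Finset.univ.erase (c j), |Qt i j| < Qt (c j) j := by
      intro j
      by_cases hj : j = 0
      · subst hj
        simpa [hQt_def] using hQ 0
      · have hcj0 : c j ≠ 0 := by
          intro h
          exact hj (by
            have : (c j).val = 0 := by rw [h]; rfl
            exact Fin.ext this)
        set r : ℝ := |Q 0 j| / Q 0 0 with hr_def
        have hr0 : 0 ≤ r := div_nonneg (abs_nonneg _) h00.le
        have hrQ : r * Q 0 0 = |Q 0 j| := div_mul_cancel₀ _ h00.ne'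
        set s : Finset (Fin (n+1)) := (Finset.univ.erase (c j)).erase 0 with hs_def
        have h0mem : (0 : Fin (n+1)) ∈ Finset.univ.erase (c j) :=
          Finset.mem_erase.2 ⟨Ne.symm hcj0, Finset.mem_univ _⟩
        have hsplit : ∑ i ∈ Finset.univ.erase (c j), |Qt i j|
            = ∑ i ∈ s, |Qt i j| := by
          rw [← Finset.sum_erase_add _ _ h0mem, hQt0 j hj]
          simp
          rfl
        have hterm : ∀ i ∈ s, |Qt i j| ≤ |Q i j| + r * |Q i 0| := by
          intro i _
          calc |Qt i j| = |Q i j - Q 0 j / Q 0 0 * Q i 0| := by rw [hQt_def]; simp [hj]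
            _ ≤ |Q i j| + |Q 0 j / Q 0 0 * Q i 0| := abs_sub _ _
            _ = |Q i j| + r * |Q i 0| := by
                rw [abs_mul, abs_div, abs_of_pos h00]
        have hsum1 : ∑ i ∈ s, |Qt i j| ≤ ∑ i ∈ s, |Q i j| + r * ∑ i ∈ s, |Q i 0| := by
          calc ∑ i ∈ s, |Qt i j| ≤ ∑ i ∈ s, (|Q i j| + r * |Q i 0|) :=
                Finset.sum_le_sum hterm
            _ = ∑ i ∈ s, |Q i j| + r * ∑ i ∈ s, |Q i 0| := by
                rw [Finset.sum_add_distrib, Finset.mul_sum]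
        -- key facts
        have hA : ∑ i ∈ s, |Q i j| + |Q 0 j| < Q (c j) j := by
          have := hQ j
          rwa [← Finset.sum_erase_add _ _ h0mem] at this
        have hB : ∑ i ∈ s, |Q i 0| + |Q (c j) 0|
            = ∑ i ∈ Finset.univ.erase (0 : Fin (n+1)), |Q i 0| := by
          rw [hs_def, Finset.erase_right_comm]
          exact Finset.sum_erase_add _ _
            (Finset.mem_erase.2 ⟨hcj0, Finset.mem_univ _⟩)
        have hR : Q (c j) j - r * |Q (c j) 0| ≤ Qt (c j) j := by
          have : |Q 0 j / Q 0 0 * Q (c j) 0| = r * |Q (c j) 0| := by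
            rw [abs_mul, abs_div, abs_of_pos h00]
          have h2 : Qt (c j) j = Q (c j) j - Q 0 j / Q 0 0 * Q (c j) 0 := by
            rw [hQt_def]; simp [hj]
          rw [h2]
          nlinarith [abs_nonneg (Q 0 j / Q 0 0 * Q (c j) 0), le_abs_self (Q 0 j / Q 0 0 * Q (c j) 0), neg_abs_le (Q 0 j / Q 0 0 * Q (c j) 0), this]
        have hrS0 : r * (∑ i ∈ Finset.univ.erase (0 : Fin (n+1)), |Q i 0|) ≤ |Q 0 j| := by
          calc r * _ ≤ r * Q 0 0 := by
                exact mul_le_mul_of_nonneg_left hS0.le hr0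
            _ = |Q 0 j| := hrQ
        rw [hsplit]
        nlinarith [hsum1, hA, hB, hR, hrS0]
    -- the reduced matrix
    set Q' : Matrix (Fin n) (Fin (l+1)) ℝ := fun i j => Qt i.succ j.succ with hQ'_def
    have hcs : ∀ i : Fin (l+1), c i.succ = (Fin.castLE hn.le i).succ := by
      intro i; exact Fin.ext (by simp [hc])
    have hQ'dom : ∀ j : Fin (l+1),
        ∑ i ∈ Finset.univ.erase (Fin.castLE hn.le j), |Q' i j| < Q' (Fin.castLE hn.le j) j := by
      intro j
      have hR : Q' (Fin.castLE hn.le j) j = Qt (c j.succ) j.succ := by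
        rw [hQ'_def, hcs]
      rw [hR]
      refine lt_of_le_of_lt ?_ (hQtdom j.succ)
      have hmap : ∑ i ∈ Finset.univ.erase (Fin.castLE hn.le j), |Q' i j|
          = ∑ i ∈ (Finset.univ.erase (Fin.castLE hn.le j)).map
              ⟨Fin.succ, Fin.succ_injective n⟩, |Qt i j.succ| := by
        rw [Finset.sum_map]
        rfl
      rw [hmap]
      apply Finset.sum_le_sum_of_subset_of_nonneg
      · intro x hx
        simp only [Finset.mem_map, Finset.mem_erase, Function.Embedding.coeFn_mk] at hx
        obtain ⟨a, ⟨ha, _⟩, rfl⟩ := hx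
        refine Finset.mem_erase.2 ⟨?_, Finset.mem_univ _⟩
        rw [hcs]
        exact fun h => ha (Fin.succ_injective _ h)
      · intro i _ _; exact abs_nonneg _
    obtain ⟨hD'pos, hbound⟩ := IH n hn Q' hQ'dom
    set D' : ℝ := (Q'.submatrix (Fin.castLE hn.le) id).det with hD'_def
    -- factor the top determinant
    have hrowexp : ∀ (ρ : Fin (l+2) → Fin (n+1)), ρ 0 = 0 →
        (Qt.submatrix ρ id).det
          = Q 0 0 * (Qt.submatrix (fun i : Fin (l+1) => ρ i.succ) Fin.succ).det := by
      intro ρ hρ0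
      rw [Matrix.det_succ_row_zero]
      rw [Finset.sum_eq_single_of_mem 0 (Finset.mem_univ _) (fun b _ hb => by
        simp only [submatrix_apply, id_eq, hρ0]
        rw [hQt0 b hb]
        ring)]
      simp only [submatrix_apply, id_eq, hρ0, Fin.val_zero, pow_zero, one_mul,
        Fin.succAbove_zero, Matrix.submatrix_submatrix]
      rw [show Qt 0 0 = Q 0 0 from rfl]
      rfl
    have hsubtop : Qt.submatrix (fun i : Fin (l+1) => c i.succ) Fin.succ
        = Q'.submatrix (Fin.castLE hn.le) id := by
      ext i j
      simp only [Matrix.submatrix_apply]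
      simp only [Matrix.submatrix_apply, hQ'_def, id_eq]
      rw [hcs]
    have htop : (Q.submatrix c id).det = Q 0 0 * D' := by
      rw [← hdet c, hrowexp c hc0, hsubtop]
    constructor
    · rw [htop]; exact mul_pos h00 hD'pos
    · intro ρ hρ
      rw [← hdet ρ, htop]
      have hval : ∀ k, ρ k ≠ 0 → (ρ k).val ≠ 0 := by
        intro k h hh; exact h (Fin.ext hh)
      by_cases h0 : ρ 0 = 0
      · have hpos' : ∀ i : Fin (l+1), (ρ i.succ).val ≠ 0 := by
          intro i
          have h1 : ρ 0 < ρ i.succ := hρ (Fin.succ_pos i)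
          rw [h0] at h1
          have h2 : (0:Fin (n+1)).val < (ρ i.succ).val := h1
          omega
        set ρ' : Fin (l+1) → Fin n := fun i => ⟨(ρ i.succ).val - 1, by
          have h2 := (ρ i.succ).isLt
          have h3 := hpos' i
          omega⟩ with hρ'_def
        have hρ' : StrictMono ρ' := by
          intro a b hab
          have h1 : ρ a.succ < ρ b.succ := hρ (Fin.succ_lt_succ_iff.2 hab)
          have h2 : (ρ a.succ).val < (ρ b.succ).val := h1
          have h3 := hpos' a
          simp only [hρ'_def, Fin.mk_lt_mk]
          omega
        have hsub : Qt.submatrix (fun i : Fin (l+1) => ρ i.succ) Fin.succ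
            = Q'.submatrix ρ' id := by
          ext a b
          simp only [Matrix.submatrix_apply]
          simp only [Matrix.submatrix_apply, hQ'_def, id_eq]
          congr 1
          refine Fin.ext ?_
          have h3 := hpos' a
          simp only [hρ'_def, Fin.val_succ]
          omega
        rw [hrowexp ρ h0, hsub, abs_mul, abs_of_pos h00]
        exact mul_le_mul_of_nonneg_left (hbound ρ' hρ') h00.le
      · have hne : ∀ k, ρ k ≠ 0 := by
          intro k h
          apply h0
          have h1 : ρ 0 ≤ ρ k := hρ.monotone (Fin.zero_le k)
          rw [h] at h1
          exact Fin.le_zero_iff.1 h1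
        have hminor : ∀ i : Fin (l+2),
            |((Qt.submatrix ρ id).submatrix i.succAbove Fin.succ).det| ≤ D' := by
          intro i
          set ρ' : Fin (l+1) → Fin n := fun k => ⟨(ρ (i.succAbove k)).val - 1, by
            have h2 := (ρ (i.succAbove k)).isLt
            have h3 := hval _ (hne (i.succAbove k))
            omega⟩ with hρ'_def
          have hρ' : StrictMono ρ' := by
            intro a b hab
            have h1 : ρ (i.succAbove a) < ρ (i.succAbove b) :=
              hρ (Fin.strictMono_succAbove i hab)
            have h2 : (ρ (i.succAbove a)).val < (ρ (i.succAbove b)).val := h1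
            have h3 := hval _ (hne (i.succAbove a))
            simp only [hρ'_def, Fin.mk_lt_mk]
            omega
          have hsub : (Qt.submatrix ρ id).submatrix i.succAbove Fin.succ
              = Q'.submatrix ρ' id := by
            ext a b
            simp only [Matrix.submatrix_apply]
            simp only [Matrix.submatrix_apply, hQ'_def, id_eq]
            congr 1
            refine Fin.ext ?_
            have h3 := hval _ (hne (i.succAbove a))
            simp only [hρ'_def, Fin.val_succ]
            omega
          rw [hsub]
          exact hbound ρ' hρ'
        have hsumρ : ∑ i : Fin (l+2), |Q (ρ i) 0| ≤ Q 0 0 := by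
          have e1 : ∑ i : Fin (l+2), |Q (ρ i) 0|
              = ∑ i ∈ Finset.univ.map ⟨ρ, hρ.injective⟩, |Q i 0| := by
            rw [Finset.sum_map]; rfl
          rw [e1]
          refine le_trans (Finset.sum_le_sum_of_subset_of_nonneg ?_
            (fun i _ _ => abs_nonneg _)) hS0.le
          intro x hx
          simp only [Finset.mem_map, Finset.mem_univ, true_and,
            Function.Embedding.coeFn_mk] at hx
          obtain ⟨a, rfl⟩ := hx
          exact Finset.mem_erase.2 ⟨hne a, Finset.mem_univ _⟩
        rw [Matrix.det_succ_column_zero]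
        calc |∑ i : Fin (l+2), (-1)^(i:ℕ) * (Qt.submatrix ρ id) i 0 *
              ((Qt.submatrix ρ id).submatrix i.succAbove Fin.succ).det|
            ≤ ∑ i : Fin (l+2), |(-1)^(i:ℕ) * (Qt.submatrix ρ id) i 0 *
              ((Qt.submatrix ρ id).submatrix i.succAbove Fin.succ).det| :=
              Finset.abs_sum_le_sum_abs _ _
          _ ≤ ∑ i : Fin (l+2), |Q (ρ i) 0| * D' := by
              refine Finset.sum_le_sum fun i _ => ?_
              have e2 : (Qt.submatrix ρ id) i 0 = Q (ρ i) 0 := by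
                simp only [submatrix_apply]
                simp [hQt_def]
              rw [abs_mul, abs_mul, abs_pow, abs_neg, abs_one, one_pow, one_mul, e2]
              exact mul_le_mul_of_nonneg_left (hminor i) (abs_nonneg _)
          _ = (∑ i : Fin (l+2), |Q (ρ i) 0|) * D' := (Finset.sum_mul _ _ _).symm
          _ ≤ Q 0 0 * D' := mul_le_mul_of_nonneg_right hsumρ hD'pos.le

/-- Let `m > l ≥ 1` and `Q` an `m × l` real matrix with
`q_{jj} > ∑_{i ≠ j} |q_{ij}|` for every column `j`.  Then the determinant of
the `l × l` submatrix `S₁` formed by the first `l` rows of `Q` is nonnegative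
and dominates the absolute value of the determinant of every `l × l`
submatrix of `Q` obtained by selecting `l` rows (in increasing order). -/
theorem det_first_rows_is_max (m l : ℕ) (hl : 1 ≤ l) (hml : l < m)
    (Q : Matrix (Fin m) (Fin l) ℝ)
    (hQ : ∀ j : Fin l,
      ∑ i ∈ Finset.univ.erase (Fin.castLE hml.le j), |Q i j|
        < Q (Fin.castLE hml.le j) j) :
    0 ≤ (Q.submatrix (Fin.castLE hml.le) id).det ∧
    ∀ ρ : Fin l → Fin m, StrictMono ρ →
      |(Q.submatrix ρ id).det| ≤ (Q.submatrix (Fin.castLE hml.le) id).det := by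
  obtain ⟨l', rfl⟩ : ∃ l', l = l' + 1 := ⟨l - 1, by omega⟩
  obtain ⟨h1, h2⟩ := aux l' m hml Q hQ
  exact ⟨h1.le, h2⟩
end

section
/- Let P be an m×m real symmetric matrix with p_{ij} ≤ 0 for i ≠ j, and row sums p̄_i := ∑_j p_{ij} satisfying 0 < r₁ ≤ p̄_i ≤ r₂ for all i. If α ∈ ℝ^m solves Pα = β, then for every pair i ≠ j, |α_i − α_j| ≤ m(m−1)(r₂/r₁) · |β|_∞ / (|p_{ij}| + r₁), where |β|_∞ = max_i |β_i|. -/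
open Finset Matrix

/-- Maximum principle: if row sums are `≥ r₁ > 0`, off-diagonal entries are
nonpositive and `P α = β` with `β ≤ B`, `0 ≤ B`, then `α ≤ B / r₁`. -/
lemma alpha_max_principle (m : ℕ) (hm : 1 ≤ m)
    (P : Matrix (Fin m) (Fin m) ℝ)
    (hoff : ∀ i j, i ≠ j → P i j ≤ 0)
    (r₁ : ℝ) (hr₁ : 0 < r₁)
    (hrow : ∀ i, r₁ ≤ ∑ j, P i j)
    (α β : Fin m → ℝ) (hsol : P.mulVec α = β)
    (B : ℝ) (hB0 : 0 ≤ B) (hB : ∀ k, β k ≤ B) :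
    ∀ k, α k ≤ B / r₁ := by
  have hne : (univ : Finset (Fin m)).Nonempty := ⟨⟨0, hm⟩, mem_univ _⟩
  obtain ⟨k₀, -, hk₀⟩ := Finset.exists_max_image univ α hne
  intro k
  have hk : α k ≤ α k₀ := hk₀ k (mem_univ k)
  have hmain : α k₀ ≤ B / r₁ := by
    rcases le_or_gt (α k₀) 0 with h0 | h0
    · exact h0.trans (div_nonneg hB0 hr₁.le)
    · have hβ : β k₀ = ∑ l, P k₀ l * α l := by
        rw [← hsol]; simp [Matrix.mulVec, dotProduct]
      have h1 : 0 ≤ ∑ l, P k₀ l * (α l - α k₀) := by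
        apply Finset.sum_nonneg
        intro l _
        rcases eq_or_ne l k₀ with rfl | hlk
        · simp
        · have h2 := hoff k₀ l hlk.symm
          have h3 : α l - α k₀ ≤ 0 := sub_nonpos.mpr (hk₀ l (mem_univ l))
          nlinarith
      have h2 : (∑ l, P k₀ l) * α k₀ ≤ β k₀ := by
        have he : ∑ l, P k₀ l * (α l - α k₀)
            = (∑ l, P k₀ l * α l) - (∑ l, P k₀ l) * α k₀ := by
          rw [Finset.sum_mul, ← Finset.sum_sub_distrib]
          exact Finset.sum_congr rfl fun l _ => by ring
        rw [he] at h1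
        linarith [hβ]
      have h3 : r₁ * α k₀ ≤ (∑ l, P k₀ l) * α k₀ :=
        mul_le_mul_of_nonneg_right (hrow k₀) h0.le
      rw [le_div_iff₀ hr₁]
      have := hB k₀
      linarith
  exact hk.trans hmain

lemma alpha_abs_bound (m : ℕ) (hm : 1 ≤ m)
    (P : Matrix (Fin m) (Fin m) ℝ)
    (hoff : ∀ i j, i ≠ j → P i j ≤ 0)
    (r₁ : ℝ) (hr₁ : 0 < r₁)
    (hrow : ∀ i, r₁ ≤ ∑ j, P i j)
    (α β : Fin m → ℝ) (hsol : P.mulVec α = β)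
    (B : ℝ) (hB0 : 0 ≤ B) (hB : ∀ k, |β k| ≤ B) :
    ∀ k, |α k| ≤ B / r₁ := by
  intro k
  have h1 : α k ≤ B / r₁ :=
    alpha_max_principle m hm P hoff r₁ hr₁ hrow α β hsol B hB0
      (fun k => (le_abs_self _).trans (hB k)) k
  have h2 : -α k ≤ B / r₁ := by
    have hsol' : P.mulVec (-α) = -β := by rw [Matrix.mulVec_neg, hsol]
    exact alpha_max_principle m hm P hoff r₁ hr₁ hrow (-α) (-β) hsol' B hB0
      (fun k => (neg_le_abs _).trans (hB k)) k
  rw [abs_le]; exact ⟨by linarith, h1⟩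

set_option maxHeartbeats 2000000 in
/-- One-sided key estimate. -/
lemma key_est (m : ℕ) (hm : 1 ≤ m)
    (P : Matrix (Fin m) (Fin m) ℝ) (hsymm : P.IsSymm)
    (hoff : ∀ i j, i ≠ j → P i j ≤ 0)
    (r₁ r₂ : ℝ) (hr₁ : 0 < r₁) (hr₁₂ : r₁ ≤ r₂)
    (hrow : ∀ i, r₁ ≤ ∑ j, P i j ∧ ∑ j, P i j ≤ r₂)
    (α β : Fin m → ℝ) (hsol : P.mulVec α = β)
    (i j : Fin m) (hij : i ≠ j)
    (B : ℝ) (hB0 : 0 ≤ B) (hB : ∀ k, |β k| ≤ B) :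
    α i - α j ≤ ↑m * (↑m - 1) * (r₂ / r₁) * B / (|P i j| + r₁) := by
  have hm2 : 2 ≤ m := by
    have := Fintype.one_lt_card_iff.mpr ⟨i, j, hij⟩
    simp at this; omega
  have hmR : (2:ℝ) ≤ (m:ℝ) := by exact_mod_cast hm2
  have hu1 : 1 ≤ r₂ / r₁ := (one_le_div hr₁).mpr hr₁₂
  have hdenom : 0 < |P i j| + r₁ := by positivity
  rcases le_or_gt (α i) (α j) with hle | hlt
  · have hnum : 0 ≤ (m:ℝ) * ((m:ℝ) - 1) * (r₂ / r₁) * B := by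
      have : (0:ℝ) ≤ (m:ℝ) - 1 := by linarith
      have h2 : (0:ℝ) ≤ r₂ / r₁ := by linarith
      positivity
    have : 0 ≤ (m:ℝ) * ((m:ℝ) - 1) * (r₂ / r₁) * B / (|P i j| + r₁) :=
      div_nonneg hnum hdenom.le
    linarith
  -- main case
  set c : ℝ := (α i + α j) / 2 with hc
  set ε : Fin m → ℝ := fun k => if c < α k then (1:ℝ) else -1 with hε
  have hci : c < α i := by rw [hc]; linarith
  have hcj : α j ≤ c := by rw [hc]; linarith
  have hεi : ε i = 1 := if_pos hci
  have hεj : ε j = -1 := if_neg (not_lt.mpr hcj)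
  have hαbd : ∀ k, |α k| ≤ B / r₁ :=
    alpha_abs_bound m hm P hoff r₁ hr₁ (fun k => (hrow k).1) α β hsol B hB0 hB
  have hcabs : |c| ≤ B / r₁ := by
    have hi := hαbd i; have hj := hαbd j
    rw [abs_le] at hi hj ⊢
    constructor <;> rw [hc] <;> [linarith [hi.1, hj.1]; linarith [hi.2, hj.2]]
  have hβk : ∀ k, β k = ∑ l, P k l * α l := by
    intro k; rw [← hsol]; simp [Matrix.mulVec, dotProduct]
  have hrow_sub : ∀ k, β k - (∑ l, P k l) * α k = ∑ l, P k l * (α l - α k) := by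
    intro k
    rw [hβk k, Finset.sum_mul, ← Finset.sum_sub_distrib]
    exact Finset.sum_congr rfl fun l _ => by ring
  -- the double-sum form of E
  have hE1 : ∑ k, ε k * (β k - (∑ l, P k l) * α k)
      = ∑ k, ∑ l, ε k * (P k l * (α l - α k)) := by
    refine Finset.sum_congr rfl fun k _ => ?_
    rw [hrow_sub k, Finset.mul_sum]
  have hE2 : ∑ k, ε k * (β k - (∑ l, P k l) * α k)
      = ∑ k, ∑ l, (-ε l) * (P k l * (α l - α k)) := by
    rw [hE1, Finset.sum_comm]
    refine Finset.sum_congr rfl fun k _ => Finset.sum_congr rfl fun l _ => ?_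
    rw [hsymm.apply k l]
    ring
  have h2E : 2 * (∑ k, ε k * (β k - (∑ l, P k l) * α k))
      = ∑ k, ∑ l, (ε k - ε l) * (P k l * (α l - α k)) := by
    rw [two_mul]
    nth_rewrite 1 [hE1]
    nth_rewrite 1 [hE2]
    rw [← Finset.sum_add_distrib]
    refine Finset.sum_congr rfl fun k _ => ?_
    rw [← Finset.sum_add_distrib]
    exact Finset.sum_congr rfl fun l _ => by ring
  -- each term of the double sum is nonnegative
  have hterm : ∀ k l, 0 ≤ (ε k - ε l) * (P k l * (α l - α k)) := by
    intro k l
    rcases eq_or_ne k l with rfl | hkl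
    · simp
    · have hP := hoff k l hkl
      by_cases hk : c < α k <;> by_cases hl : c < α l <;>
        simp only [hε, hk, hl, if_pos, if_neg, if_true, if_false]
      · simp
      · have h1 : α l - α k ≤ 0 := by push_neg at hl; linarith
        nlinarith
      · have h1 : 0 ≤ α l - α k := by push_neg at hk; linarith
        nlinarith
      · simp
  have habsP : |P i j| = -P i j := abs_of_nonpos (hoff i j hij)
  have hij_val : (ε i - ε j) * (P i j * (α j - α i)) = 2 * |P i j| * (α i - α j) := by
    rw [hεi, hεj, habsP]; ring
  have hji_val : (ε j - ε i) * (P j i * (α i - α j)) = 2 * |P i j| * (α i - α j) := by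
    rw [hεi, hεj, habsP, hsymm.apply i j]; ring
  -- extract the (i,j) and (j,i) terms
  have hsum_ge : 4 * |P i j| * (α i - α j)
      ≤ ∑ k, ∑ l, (ε k - ε l) * (P k l * (α l - α k)) := by
    have hrow_nn : ∀ k, 0 ≤ ∑ l, (ε k - ε l) * (P k l * (α l - α k)) :=
      fun k => Finset.sum_nonneg fun l _ => hterm k l
    have hsub : ∑ k ∈ ({i, j} : Finset (Fin m)), (∑ l, (ε k - ε l) * (P k l * (α l - α k)))
        ≤ ∑ k, ∑ l, (ε k - ε l) * (P k l * (α l - α k)) :=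
      Finset.sum_le_sum_of_subset_of_nonneg (Finset.subset_univ _)
        (fun k _ _ => hrow_nn k)
    rw [Finset.sum_pair hij] at hsub
    have hi_ge : (ε i - ε j) * (P i j * (α j - α i))
        ≤ ∑ l, (ε i - ε l) * (P i l * (α l - α i)) :=
      Finset.single_le_sum (fun l _ => hterm i l) (mem_univ j)
    have hj_ge : (ε j - ε i) * (P j i * (α i - α j))
        ≤ ∑ l, (ε j - ε l) * (P j l * (α l - α j)) :=
      Finset.single_le_sum (fun l _ => hterm j l) (mem_univ i)
    rw [hij_val] at hi_ge
    rw [hji_val] at hj_ge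
    linarith
  have hE_ge : 2 * |P i j| * (α i - α j)
      ≤ ∑ k, ε k * (β k - (∑ l, P k l) * α k) := by linarith
  -- middle term bound
  have hmid : r₁ * (α i - α j) ≤ ∑ k, ε k * ((∑ l, P k l) * (α k - c)) := by
    have hnn : ∀ k, 0 ≤ ε k * ((∑ l, P k l) * (α k - c)) := by
      intro k
      have hpk := (hrow k).1
      by_cases hk : c < α k <;> simp only [hε, hk, if_true, if_false]
      · nlinarith
      · push_neg at hk; nlinarith
    have hsub : ∑ k ∈ ({i, j} : Finset (Fin m)), ε k * ((∑ l, P k l) * (α k - c))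
        ≤ ∑ k, ε k * ((∑ l, P k l) * (α k - c)) :=
      Finset.sum_le_sum_of_subset_of_nonneg (Finset.subset_univ _)
        (fun k _ _ => hnn k)
    rw [Finset.sum_pair hij] at hsub
    have h5i : r₁ * (α i - c) ≤ ε i * ((∑ l, P i l) * (α i - c)) := by
      rw [hεi, one_mul]
      exact mul_le_mul_of_nonneg_right (hrow i).1 (by linarith)
    have h5j : r₁ * (c - α j) ≤ ε j * ((∑ l, P j l) * (α j - c)) := by
      rw [hεj]
      have hre : (-1 : ℝ) * ((∑ l, P j l) * (α j - c)) = (∑ l, P j l) * (c - α j) := by ring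
      rw [hre]
      exact mul_le_mul_of_nonneg_right (hrow j).1 (by linarith)
    have hcc : α i - c + (c - α j) = α i - α j := by ring
    linarith
  -- bound on |∑ ε p̄|
  have habsD : |∑ k, ε k * (∑ l, P k l)| ≤ ((m:ℝ) - 1) * r₂ - r₁ := by
    have hcard : ∀ x : Fin m, ((univ.erase x).card : ℝ) = (m:ℝ) - 1 := by
      intro x
      rw [Finset.card_erase_of_mem (mem_univ x)]
      simp
      rw [Nat.cast_sub hm]
      simp
    have hub : ∀ k, ε k * (∑ l, P k l) ≤ r₂ := by
      intro k
      have h1 := (hrow k).1; have h2 := (hrow k).2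
      by_cases hk : c < α k <;> simp only [hε, hk, if_true, if_false] <;> nlinarith
    have hlb : ∀ k, -r₂ ≤ ε k * (∑ l, P k l) := by
      intro k
      have h1 := (hrow k).1; have h2 := (hrow k).2
      by_cases hk : c < α k <;> simp only [hε, hk, if_true, if_false] <;> nlinarith
    rw [abs_le]
    constructor
    · -- lower bound, split off i
      have hsplit : ∑ k ∈ univ.erase i, ε k * (∑ l, P k l) + ε i * (∑ l, P i l)
          = ∑ k, ε k * (∑ l, P k l) :=
        Finset.sum_erase_add univ (fun k => ε k * (∑ l, P k l)) (mem_univ i)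
      have hsum_lb : -(((m:ℝ) - 1) * r₂) ≤ ∑ k ∈ univ.erase i, ε k * (∑ l, P k l) := by
        have := Finset.card_nsmul_le_sum (univ.erase i)
          (fun k => ε k * (∑ l, P k l)) (-r₂) (fun k _ => hlb k)
        rw [nsmul_eq_mul, hcard i] at this
        linarith
      have hival : r₁ ≤ ε i * (∑ l, P i l) := by rw [hεi]; linarith [(hrow i).1]
      linarith
    · have hsplit : ∑ k ∈ univ.erase j, ε k * (∑ l, P k l) + ε j * (∑ l, P j l)
          = ∑ k, ε k * (∑ l, P k l) :=
        Finset.sum_erase_add univ (fun k => ε k * (∑ l, P k l)) (mem_univ j)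
      have hsum_ub : ∑ k ∈ univ.erase j, ε k * (∑ l, P k l) ≤ ((m:ℝ) - 1) * r₂ := by
        have := Finset.sum_le_card_nsmul (univ.erase j)
          (fun k => ε k * (∑ l, P k l)) r₂ (fun k _ => hub k)
        rw [nsmul_eq_mul, hcard j] at this
        linarith
      have hjval : ε j * (∑ l, P j l) ≤ -r₁ := by rw [hεj]; linarith [(hrow j).1]
      linarith
  -- decomposition identity
  have hEval : (∑ k, ε k * (β k - (∑ l, P k l) * α k))
        + (∑ k, ε k * ((∑ l, P k l) * (α k - c)))
        + c * (∑ k, ε k * (∑ l, P k l))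
      = ∑ k, ε k * β k := by
    rw [Finset.mul_sum, ← Finset.sum_add_distrib, ← Finset.sum_add_distrib]
    exact Finset.sum_congr rfl fun k _ => by ring
  -- bound ∑ ε β
  have hβsum : ∑ k, ε k * β k ≤ (m:ℝ) * B := by
    have h1 : ∀ k : Fin m, ε k * β k ≤ B := by
      intro k
      have h2 : |ε k * β k| = |β k| := by
        rw [abs_mul]
        have : |ε k| = 1 := by
          by_cases hk : c < α k <;> simp [hε, hk]
        rw [this, one_mul]
      calc ε k * β k ≤ |ε k * β k| := le_abs_self _
        _ = |β k| := h2
        _ ≤ B := hB k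
    have := Finset.sum_le_card_nsmul univ (fun k => ε k * β k) B (fun k _ => h1 k)
    simpa [nsmul_eq_mul, mul_comm] using this
  have hcd : -(c * (∑ k, ε k * (∑ l, P k l))) ≤ (B / r₁) * (((m:ℝ) - 1) * r₂ - r₁) := by
    calc -(c * (∑ k, ε k * (∑ l, P k l))) ≤ |c * (∑ k, ε k * (∑ l, P k l))| :=
          neg_le_abs _
      _ = |c| * |∑ k, ε k * (∑ l, P k l)| := abs_mul _ _
      _ ≤ (B / r₁) * (((m:ℝ) - 1) * r₂ - r₁) :=
          mul_le_mul hcabs habsD (abs_nonneg _) (div_nonneg hB0 hr₁.le)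
  have h7 : 2 * |P i j| * (α i - α j) + r₁ * (α i - α j)
      ≤ (m:ℝ) * B + (B / r₁) * (((m:ℝ) - 1) * r₂ - r₁) := by linarith
  -- final arithmetic
  have he1 : (B / r₁) * (((m:ℝ) - 1) * r₂ - r₁) = ((m:ℝ) - 1) * ((r₂ / r₁) * B) - B := by
    field_simp
  rw [he1] at h7
  rw [le_div_iff₀ hdenom]
  have hd : 0 < α i - α j := by linarith
  have hpd : 0 ≤ |P i j| * (α i - α j) := mul_nonneg (abs_nonneg _) hd.le
  have k1 : ((m:ℝ) - 1) * (1 + (r₂ / r₁)) * B ≤ (m:ℝ) * ((m:ℝ) - 1) * (r₂ / r₁) * B := by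
    nlinarith [mul_nonneg (mul_nonneg (by linarith : (0:ℝ) ≤ (m:ℝ) - 1)
      (by linarith : (0:ℝ) ≤ (r₂ / r₁) - 1)) hB0,
      mul_nonneg (mul_nonneg (by linarith : (0:ℝ) ≤ (m:ℝ) - 2)
      (by linarith : (0:ℝ) ≤ r₂ / r₁)) hB0]
  nlinarith [h7, k1, hpd]

/-- If `P` is a real symmetric `m × m` matrix with nonpositive off-diagonal
entries and all row sums in `[r₁, r₂]` with `0 < r₁ ≤ r₂`, and `P α = β`, then
`|α_i − α_j| ≤ m (m−1) (r₂/r₁) |β|_∞ / (|p_{ij}| + r₁)` for all `i ≠ j`. -/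
theorem alpha_diff_estimate (m : ℕ) (hm : 1 ≤ m)
    (P : Matrix (Fin m) (Fin m) ℝ) (hsymm : P.IsSymm)
    (hoff : ∀ i j, i ≠ j → P i j ≤ 0)
    (r₁ r₂ : ℝ) (hr₁ : 0 < r₁) (hr₁₂ : r₁ ≤ r₂)
    (hrow : ∀ i, r₁ ≤ ∑ j, P i j ∧ ∑ j, P i j ≤ r₂)
    (α β : Fin m → ℝ) (hsol : P.mulVec α = β)
    (i j : Fin m) (hij : i ≠ j) :
    |α i - α j| ≤ m * (m - 1) * (r₂ / r₁) *
      (Finset.univ.sup' ⟨i, Finset.mem_univ i⟩ (fun k => |β k|)) /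
        (|P i j| + r₁) := by
  set B : ℝ := Finset.univ.sup' ⟨i, Finset.mem_univ i⟩ (fun k => |β k|) with hBdef
  have hB : ∀ k, |β k| ≤ B := fun k => Finset.le_sup' (fun k => |β k|) (mem_univ k)
  have hB0 : 0 ≤ B := (abs_nonneg _).trans (hB i)
  rw [abs_sub_le_iff]
  constructor
  · exact key_est m hm P hsymm hoff r₁ r₂ hr₁ hr₁₂ hrow α β hsol i j hij B hB0 hB
  · have h := key_est m hm P hsymm hoff r₁ r₂ hr₁ hr₁₂ hrow α β hsol j i hij.symm B hB0 hB
    rwa [show P j i = P i j from hsymm.apply i j] at h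
end

section
/- In the 2×2 case of the matrix estimate: if P is a 2×2 real symmetric matrix with p_{12} = p_{21} ≤ 0 and row sums p̄₁, p̄₂ ∈ [r₁, r₂] with 0 < r₁ ≤ r₂, and α solves Pα = β, then det P ≥ r₁(r₁ + |p_{12}|) > 0 and |α₁ − α₂| ≤ 2 r₂ |β|_∞ / (r₁(r₁ + |p_{12}|)). -/
open Finset Matrix

/-- The `2 × 2` case of the matrix estimate: if `P` is real symmetric with
`p₀₁ = p₁₀ ≤ 0` and row sums in `[r₁, r₂]`, `0 < r₁ ≤ r₂`, and `P α = β`, then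
`det P ≥ r₁ (r₁ + |p₀₁|) > 0` and
`|α₀ − α₁| ≤ 2 r₂ |β|_∞ / (r₁ (r₁ + |p₀₁|))`. -/
theorem two_by_two_estimate
    (P : Matrix (Fin 2) (Fin 2) ℝ) (hsymm : P.IsSymm)
    (hoff : P 0 1 ≤ 0)
    (r₁ r₂ : ℝ) (hr₁ : 0 < r₁) (hr₁₂ : r₁ ≤ r₂)
    (hrow : ∀ i, r₁ ≤ ∑ j, P i j ∧ ∑ j, P i j ≤ r₂)
    (α β : Fin 2 → ℝ) (hsol : P.mulVec α = β) :
    r₁ * (r₁ + |P 0 1|) ≤ P.det ∧ 0 < r₁ * (r₁ + |P 0 1|) ∧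
    |α 0 - α 1| ≤ 2 * r₂ * max |β 0| |β 1| / (r₁ * (r₁ + |P 0 1|)) := by
  have hb : P 1 0 = P 0 1 := by
    have := congrFun (congrFun hsymm.eq 1) 0
    simpa [Matrix.transpose_apply] using this.symm
  set a := P 0 0 with ha
  set b := P 0 1 with hbdef
  set c := P 1 1 with hc
  have e0 : a * α 0 + b * α 1 = β 0 := by
    have := congrFun hsol 0
    simpa [Matrix.mulVec, dotProduct, Fin.sum_univ_two] using this
  have e1 : b * α 0 + c * α 1 = β 1 := by
    have := congrFun hsol 1
    simpa [Matrix.mulVec, dotProduct, Fin.sum_univ_two, hb] using this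
  have hr0 := hrow 0
  have hr1' := hrow 1
  simp only [Fin.sum_univ_two, hb] at hr0 hr1'
  have hdet : P.det = a * c - b * b := by
    rw [Matrix.det_fin_two, hb]
  have habs : |b| = -b := abs_of_nonpos hoff
  have hD : r₁ * (r₁ + |b|) ≤ P.det := by
    rw [hdet, habs]
    nlinarith [mul_nonneg (neg_nonneg.2 hoff) (sub_nonneg.2 hr0.1),
      mul_nonneg (neg_nonneg.2 hoff) (sub_nonneg.2 hr1'.1),
      mul_le_mul hr0.1 hr1'.1 hr₁.le (by linarith : (0:ℝ) ≤ a + b)]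
  have hDpos : 0 < r₁ * (r₁ + |b|) := by
    have : 0 ≤ |b| := abs_nonneg b
    nlinarith
  refine ⟨hD, hDpos, ?_⟩
  have hdetpos : 0 < P.det := lt_of_lt_of_le hDpos hD
  have key : P.det * (α 0 - α 1) = (b + c) * β 0 - (a + b) * β 1 := by
    rw [hdet]; linear_combination (c + b) * e0 - (a + b) * e1
  have hM0 : |β 0| ≤ max |β 0| |β 1| := le_max_left _ _
  have hM1 : |β 1| ≤ max |β 0| |β 1| := le_max_right _ _
  have hMnn : 0 ≤ max |β 0| |β 1| := le_trans (abs_nonneg _) hM0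
  rw [le_div_iff₀ hDpos]
  have h1 : |α 0 - α 1| * (r₁ * (r₁ + |b|)) ≤ |α 0 - α 1| * P.det :=
    mul_le_mul_of_nonneg_left hD (abs_nonneg _)
  have h2 : |α 0 - α 1| * P.det = |(b + c) * β 0 - (a + b) * β 1| := by
    rw [← key, abs_mul, abs_of_pos hdetpos, mul_comm]
  have h3 : |(b + c) * β 0 - (a + b) * β 1| ≤ 2 * r₂ * max |β 0| |β 1| := by
    calc |(b + c) * β 0 - (a + b) * β 1|
        ≤ |(b + c) * β 0| + |(a + b) * β 1| := abs_sub _ _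
      _ = (b + c) * |β 0| + (a + b) * |β 1| := by
          rw [abs_mul, abs_mul, abs_of_nonneg (by linarith : (0:ℝ) ≤ b + c),
            abs_of_nonneg (by linarith : (0:ℝ) ≤ a + b)]
      _ ≤ r₂ * max |β 0| |β 1| + r₂ * max |β 0| |β 1| := by
          have t0 : (b + c) * |β 0| ≤ r₂ * max |β 0| |β 1| :=
            mul_le_mul hr1'.2 hM0 (abs_nonneg _) (by linarith)
          have t1 : (a + b) * |β 1| ≤ r₂ * max |β 0| |β 1| :=
            mul_le_mul hr0.2 hM1 (abs_nonneg _) (by linarith)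
          linarith
      _ = 2 * r₂ * max |β 0| |β 1| := by ring
  linarith [h1, h2.le, h3, h2.ge]
end

section
/- Let v₁, v₂ ∈ ℝ^m, and let P be an m×m real symmetric matrix with nonpositive off-diagonal entries and row sums in [r₁, r₂], 0 < r₁ ≤ r₂. Then for m ≥ 2, the determinant of P satisfies det P ≥ r₁(|p_{12}| + r₁) · det P'', where P'' is the (m−2)×(m−2) submatrix of P obtained by deleting the first two rows and columns, and det P'' > 0. -/
open Finset Matrix

noncomputable def schurC {k : ℕ} (M : Matrix (Fin (k+1)) (Fin (k+1)) ℝ) :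
    Matrix (Fin k) (Fin k) ℝ :=
  fun i j => M i.castSucc j.castSucc -
    M i.castSucc (Fin.last k) * M (Fin.last k) j.castSucc / M (Fin.last k) (Fin.last k)

lemma det_eq_schurC {k : ℕ} (M : Matrix (Fin (k+1)) (Fin (k+1)) ℝ)
    (hd : M (Fin.last k) (Fin.last k) ≠ 0) :
    M.det = M (Fin.last k) (Fin.last k) * (schurC M).det := by
  set e : Fin k ⊕ Fin 1 ≃ Fin (k+1) := finSumFinEquiv with he
  rw [← Matrix.det_submatrix_equiv_self e M]
  set N := M.submatrix e e with hN
  have hblocks : N = Matrix.fromBlocks N.toBlocks₁₁ N.toBlocks₁₂ N.toBlocks₂₁ N.toBlocks₂₂ :=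
    (Matrix.fromBlocks_toBlocks N).symm
  have heL : ∀ i : Fin k, e (Sum.inl i) = i.castSucc := by
    intro i; ext; simp [he, finSumFinEquiv]
  have heR : ∀ j : Fin 1, e (Sum.inr j) = Fin.last k := by
    intro j; ext; simp [he, finSumFinEquiv, Fin.last]
  have hD : N.toBlocks₂₂ * Matrix.of (fun _ _ : Fin 1 =>
      (M (Fin.last k) (Fin.last k))⁻¹) = 1 := by
    ext i j
    simp only [Matrix.mul_apply, Fin.sum_univ_one, Matrix.toBlocks₂₂, Matrix.of_apply,
      hN, Matrix.submatrix_apply, heR]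
    rw [mul_inv_cancel₀ hd]
    simp [Subsingleton.elim i j, Matrix.one_apply]
  letI : Invertible N.toBlocks₂₂ := invertibleOfRightInverse _ _ hD
  have hinv : ⅟ N.toBlocks₂₂ = Matrix.of (fun _ _ : Fin 1 =>
      (M (Fin.last k) (Fin.last k))⁻¹) := invOf_eq_right_inv hD
  rw [hblocks, Matrix.det_fromBlocks₂₂]
  congr 1
  · rw [Matrix.det_fin_one]
    simp [Matrix.toBlocks₂₂, hN, heR]
  · congr 1
    ext i j
    simp only [hinv]
    simp only [Matrix.sub_apply, Matrix.toBlocks₁₁, Matrix.toBlocks₁₂, Matrix.toBlocks₂₁,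
      Matrix.mul_apply, Fin.sum_univ_one, hinv, Matrix.of_apply, hN, Matrix.submatrix_apply,
      heL, heR, schurC]
    ring

lemma keyLemma : ∀ (n : ℕ) (A : Matrix (Fin (n+1)) (Fin (n+1)) ℝ),
    A.IsSymm → (∀ i j, i ≠ j → A i j ≤ 0) → (∀ i, 0 ≤ ∑ j, A i j) →
    0 ≤ (A.submatrix Fin.succ Fin.succ).det ∧
      (∑ j, A 0 j) * (A.submatrix Fin.succ Fin.succ).det ≤ A.det := by
  intro n
  induction n with
  | zero =>
    intro A _ _ _
    have h1 : (A.submatrix Fin.succ Fin.succ).det = 1 := Matrix.det_fin_zero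
    rw [h1, Matrix.det_fin_one, Fin.sum_univ_one]
    simp
  | succ n ih =>
    intro A hsymm hoff hrow
    set ℓ : Fin (n+2) := Fin.last (n+1) with hℓ
    set d : ℝ := A ℓ ℓ with hdd
    -- off-diagonal entries of row ℓ sum to a nonpositive value
    have herase : ∀ i : Fin (n+2), ∑ j ∈ Finset.univ.erase i, A i j ≤ 0 := by
      intro i
      exact Finset.sum_nonpos fun j hj => hoff i j (Ne.symm (Finset.ne_of_mem_erase hj))
    have hsplit : ∀ i : Fin (n+2), A i i + ∑ j ∈ Finset.univ.erase i, A i j = ∑ j, A i j := by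
      intro i; exact Finset.add_sum_erase _ _ (Finset.mem_univ i)
    have hd0 : 0 ≤ d := by
      have := hsplit ℓ; have := herase ℓ; have := hrow ℓ; linarith [hrow ℓ]
    rcases eq_or_lt_of_le hd0 with hzero | hpos
    · -- degenerate case: row ℓ is zero
      have hrowzero : ∀ j, A ℓ j = 0 := by
        have hsum0 : ∑ j ∈ Finset.univ.erase ℓ, A ℓ j = 0 := by
          have := hsplit ℓ; have := hrow ℓ; have := herase ℓ; linarith
        have hall := (Finset.sum_eq_zero_iff_of_nonpos
          (fun j hj => hoff ℓ j (Ne.symm (Finset.ne_of_mem_erase hj)))).mp hsum0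
        intro j
        rcases eq_or_ne j ℓ with rfl | hne
        · exact hzero.symm
        · exact hall j (Finset.mem_erase.mpr ⟨hne, Finset.mem_univ j⟩)
      have hdetA : A.det = 0 := Matrix.det_eq_zero_of_row_eq_zero ℓ hrowzero
      have hdetA' : (A.submatrix Fin.succ Fin.succ).det = 0 := by
        apply Matrix.det_eq_zero_of_row_eq_zero (Fin.last n)
        intro j
        simp only [Matrix.submatrix_apply, Fin.succ_last]
        exact hrowzero _
      rw [hdetA, hdetA']
      simp
    · -- main case: pivot on last index
      set B : Matrix (Fin (n+1)) (Fin (n+1)) ℝ := schurC A with hB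
      have hAij : ∀ i j : Fin (n+2), A i j = A j i := fun i j => (hsymm.apply j i)
      have hBsymm : B.IsSymm := by
        refine Matrix.IsSymm.ext fun i j => ?_
        simp only [hB, schurC]
        rw [hAij j.castSucc i.castSucc, hAij ℓ i.castSucc, hAij j.castSucc ℓ]
        ring
      have hcsne : ∀ i : Fin (n+1), i.castSucc ≠ ℓ := fun i =>
        Fin.ne_of_lt (Fin.castSucc_lt_last i)
      have hBoff : ∀ i j, i ≠ j → B i j ≤ 0 := by
        intro i j hne
        have h1 : A i.castSucc j.castSucc ≤ 0 :=
          hoff _ _ (fun h => hne (Fin.castSucc_injective _ h))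
        have h2 : A i.castSucc ℓ ≤ 0 := hoff _ _ (hcsne i)
        have h3 : A ℓ j.castSucc ≤ 0 := hoff _ _ (Ne.symm (hcsne j))
        have h4 : 0 ≤ A i.castSucc ℓ * A ℓ j.castSucc := by nlinarith
        have : 0 ≤ A i.castSucc ℓ * A ℓ j.castSucc / d := div_nonneg h4 hd0
        simp only [hB, schurC]; linarith
      -- row sums of B
      have hsumB : ∀ i : Fin (n+1),
          ∑ j, B i j = (∑ j, A i.castSucc j) - A i.castSucc ℓ * (∑ j, A ℓ j) / d := by
        intro i
        have hA1 : ∑ j : Fin (n+1), A i.castSucc j.castSucc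
            = (∑ j, A i.castSucc j) - A i.castSucc ℓ := by
          rw [Fin.sum_univ_castSucc (f := fun j => A i.castSucc j), hℓ]; ring
        have hA2 : ∑ j : Fin (n+1), A ℓ j.castSucc = (∑ j, A ℓ j) - d := by
          rw [Fin.sum_univ_castSucc (f := fun j => A ℓ j), hdd, hℓ]; ring
        simp only [hB, schurC]
        rw [Finset.sum_sub_distrib]
        rw [← Finset.sum_div, ← Finset.mul_sum, hA1, hA2]
        simp only [← hℓ, ← hdd]
        field_simp
        ring
      have hBrow : ∀ i, 0 ≤ ∑ j, B i j := by
        intro i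
        rw [hsumB i]
        have h2 : A i.castSucc ℓ ≤ 0 := hoff _ _ (hcsne i)
        have h3 : 0 ≤ ∑ j, A ℓ j := hrow ℓ
        have h5 : 0 ≤ ∑ j, A i.castSucc j := hrow _
        have : A i.castSucc ℓ * (∑ j, A ℓ j) / d ≤ 0 :=
          div_nonpos_of_nonpos_of_nonneg (mul_nonpos_of_nonpos_of_nonneg h2 h3) hd0
        linarith
      obtain ⟨ih1, ih2⟩ := ih B hBsymm hBoff hBrow
      have hdetA : A.det = d * B.det := det_eq_schurC A (ne_of_gt hpos)
      -- Schur of A' equals B'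
      have hA'last : (A.submatrix Fin.succ Fin.succ) (Fin.last n) (Fin.last n) = d := by
        simp only [Matrix.submatrix_apply, Fin.succ_last]
        rfl
      have hschurA' : schurC (A.submatrix Fin.succ Fin.succ) = B.submatrix Fin.succ Fin.succ := by
        ext i j
        simp only [schurC, hB, Matrix.submatrix_apply, Fin.succ_last, Fin.succ_castSucc]
      have hdetA' : (A.submatrix Fin.succ Fin.succ).det
          = d * (B.submatrix Fin.succ Fin.succ).det := by
        rw [det_eq_schurC (A.submatrix Fin.succ Fin.succ) (by rw [hA'last]; exact ne_of_gt hpos),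
          hA'last, hschurA']
      constructor
      · rw [hdetA']; positivity
      · -- ∑ B 0 j ≥ ∑ A 0 j
        have hq0 : ∑ j, A 0 j ≤ ∑ j, B 0 j := by
          rw [hsumB 0]
          have hc0 : (Fin.castSucc (0 : Fin (n+1))) = (0 : Fin (n+2)) := rfl
          rw [hc0]
          have h2 : A 0 ℓ ≤ 0 := by
            rw [← hc0]; exact hoff _ _ (hcsne 0)
          have h3 : 0 ≤ ∑ j, A ℓ j := hrow ℓ
          have : A 0 ℓ * (∑ j, A ℓ j) / d ≤ 0 :=
            div_nonpos_of_nonpos_of_nonneg (mul_nonpos_of_nonpos_of_nonneg h2 h3) hd0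
          linarith
        have hA00 : 0 ≤ ∑ j, A 0 j := hrow 0
        rw [hdetA, hdetA']
        calc (∑ j, A 0 j) * (d * (B.submatrix Fin.succ Fin.succ).det)
            = d * ((∑ j, A 0 j) * (B.submatrix Fin.succ Fin.succ).det) := by ring
          _ ≤ d * ((∑ j, B 0 j) * (B.submatrix Fin.succ Fin.succ).det) := by
              apply mul_le_mul_of_nonneg_left _ hd0
              exact mul_le_mul_of_nonneg_right hq0 ih1
          _ ≤ d * B.det := mul_le_mul_of_nonneg_left ih2 hd0

/-- For a real symmetric `m × m` matrix (`m ≥ 2`) with nonpositive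
off-diagonal entries and row sums in `[r₁, r₂]`, `0 < r₁ ≤ r₂`, we have
`det P ≥ r₁ (|p₀₁| + r₁) det P''` where `P''` is the principal submatrix on
the last `m − 2` rows and columns, and `det P'' > 0`. -/
theorem det_lower_bound (m : ℕ) (hm : 2 ≤ m)
    (P : Matrix (Fin m) (Fin m) ℝ) (hsymm : P.IsSymm)
    (hoff : ∀ i j, i ≠ j → P i j ≤ 0)
    (r₁ r₂ : ℝ) (hr₁ : 0 < r₁) (hr₁₂ : r₁ ≤ r₂)
    (hrow : ∀ i, r₁ ≤ ∑ j, P i j ∧ ∑ j, P i j ≤ r₂) :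
    r₁ * (|P ⟨0, by omega⟩ ⟨1, by omega⟩| + r₁) *
        (P.submatrix (fun i : Fin (m - 2) => (⟨i.1 + 2, by omega⟩ : Fin m))
          (fun i : Fin (m - 2) => (⟨i.1 + 2, by omega⟩ : Fin m))).det
      ≤ P.det ∧
    0 < (P.submatrix (fun i : Fin (m - 2) => (⟨i.1 + 2, by omega⟩ : Fin m))
          (fun i : Fin (m - 2) => (⟨i.1 + 2, by omega⟩ : Fin m))).det := by
  obtain ⟨n, rfl⟩ : ∃ n, m = n + 2 := ⟨m - 2, by omega⟩
  -- first application of keyLemma to P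
  obtain ⟨h1a, h1b⟩ := keyLemma (n+1) P hsymm hoff (fun i => le_trans hr₁.le (hrow i).1)
  set P' : Matrix (Fin (n+1)) (Fin (n+1)) ℝ := P.submatrix Fin.succ Fin.succ with hP'
  have hP'symm : P'.IsSymm := by
    refine Matrix.IsSymm.ext fun i j => ?_
    simp only [hP', Matrix.submatrix_apply]
    exact hsymm.apply _ _
  have hP'off : ∀ i j, i ≠ j → P' i j ≤ 0 := fun i j hne =>
    hoff _ _ (fun h => hne (Fin.succ_injective _ h))
  have hsumP' : ∀ i : Fin (n+1), ∑ j, P' i j = (∑ j, P i.succ j) - P i.succ 0 := by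
    intro i
    simp only [hP', Matrix.submatrix_apply]
    rw [Fin.sum_univ_succ (f := fun j => P i.succ j)]
    ring
  have hP'row0 : ∀ i : Fin (n+1), r₁ ≤ ∑ j, P' i j := by
    intro i
    rw [hsumP' i]
    have h2 : P i.succ 0 ≤ 0 := hoff _ _ (Fin.succ_ne_zero i)
    have := (hrow i.succ).1
    linarith
  obtain ⟨h2a, h2b⟩ := keyLemma n P' hP'symm hP'off (fun i => le_trans hr₁.le (hP'row0 i))
  -- the submatrix P'' in the statement
  have hmain :
      r₁ * (|P 0 1| + r₁) * ((P.submatrix Fin.succ Fin.succ).submatrix Fin.succ Fin.succ).det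
        ≤ P.det ∧
      0 < ((P.submatrix Fin.succ Fin.succ).submatrix Fin.succ Fin.succ).det := by
    have hP01 : P 1 0 = P 0 1 := hsymm.apply _ _
    have hP01n : P 0 1 ≤ 0 := hoff 0 1 (zero_ne_one)
    have habs : |P 0 1| = -(P 0 1) := abs_of_nonpos hP01n
    have hsucc0 : (Fin.succ (0 : Fin (n+1))) = (1 : Fin (n+2)) := rfl
    have hq1 : r₁ + |P 0 1| ≤ ∑ j, P' 0 j := by
      rw [hsumP' 0, hsucc0, hP01, habs]
      have := (hrow 1).1
      linarith
    -- strict positivity of det P'' by diagonal dominance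
    have hP''pos : 0 < ((P.submatrix Fin.succ Fin.succ).submatrix Fin.succ Fin.succ).det := by
      rcases lt_or_eq_of_le h2a with h | h
      · exact h
      · exfalso
        apply det_ne_zero_of_sum_row_lt_diag
          (A := (P.submatrix Fin.succ Fin.succ).submatrix Fin.succ Fin.succ) _ h.symm
        intro k
        set a : Fin (n+2) := k.succ.succ with ha
        have hdiag : P a a = (∑ j, P a j) + ∑ j ∈ Finset.univ.erase a, (-(P a j)) := by
          have := Finset.add_sum_erase Finset.univ (fun j => P a j) (Finset.mem_univ a)
          rw [Finset.sum_neg_distrib]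
          linarith
        have hoffa : ∀ b ∈ Finset.univ.erase a, 0 ≤ -(P a b) := by
          intro b hb
          have := hoff a b (Ne.symm (Finset.ne_of_mem_erase hb))
          linarith
        have hdiagpos : 0 < P a a := by
          rw [hdiag]
          have := (hrow a).1
          have := Finset.sum_nonneg hoffa
          linarith
        have hg : Function.Injective (fun j : Fin n => (j.succ.succ : Fin (n+2))) :=
          fun i j h => Fin.succ_injective _ (Fin.succ_injective _ h)
        have himage : (Finset.univ.erase k).image (fun j : Fin n => (j.succ.succ : Fin (n+2)))
            ⊆ Finset.univ.erase a := by
          intro b hb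
          simp only [Finset.mem_image, Finset.mem_erase] at hb ⊢
          obtain ⟨j, ⟨hjk, -⟩, rfl⟩ := hb
          exact ⟨fun h => hjk (hg h), Finset.mem_univ _⟩
        have hsum_le : ∑ j ∈ Finset.univ.erase k, (-(P a j.succ.succ))
            ≤ ∑ b ∈ Finset.univ.erase a, (-(P a b)) := by
          have himg := Finset.sum_image (s := Finset.univ.erase k)
            (g := fun j : Fin n => (j.succ.succ : Fin (n+2)))
            (f := fun b => -(P a b)) (fun x _ y _ h => hg h)
          calc ∑ j ∈ Finset.univ.erase k, (-(P a j.succ.succ))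
              = ∑ b ∈ (Finset.univ.erase k).image
                  (fun j : Fin n => (j.succ.succ : Fin (n+2))), (-(P a b)) := himg.symm
            _ ≤ ∑ b ∈ Finset.univ.erase a, (-(P a b)) :=
                Finset.sum_le_sum_of_subset_of_nonneg himage (fun b hb _ => hoffa b hb)
        have hnorm : ∀ j : Fin n, j ≠ k →
            ‖((P.submatrix Fin.succ Fin.succ).submatrix Fin.succ Fin.succ) k j‖
              = -(P a j.succ.succ) := by
          intro j hj
          simp only [Matrix.submatrix_apply, Real.norm_eq_abs]
          exact abs_of_nonpos (hoff _ _ (fun h => hj (hg h).symm))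
        calc ∑ j ∈ Finset.univ.erase k,
              ‖((P.submatrix Fin.succ Fin.succ).submatrix Fin.succ Fin.succ) k j‖
            = ∑ j ∈ Finset.univ.erase k, (-(P a j.succ.succ)) := by
              refine Finset.sum_congr rfl fun j hj => ?_
              exact hnorm j (Finset.mem_erase.mp hj).1
          _ ≤ ∑ b ∈ Finset.univ.erase a, (-(P a b)) := hsum_le
          _ < P a a := by
              rw [hdiag]
              have := (hrow a).1
              linarith
          _ = ‖((P.submatrix Fin.succ Fin.succ).submatrix Fin.succ Fin.succ) k k‖ := by
              simp only [Matrix.submatrix_apply, Real.norm_eq_abs]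
              exact (abs_of_pos hdiagpos).symm
    refine ⟨?_, hP''pos⟩
    -- chain of inequalities
    have hq0 : r₁ ≤ ∑ j, P 0 j := (hrow 0).1
    have hP''nn : 0 ≤ ((P.submatrix Fin.succ Fin.succ).submatrix Fin.succ Fin.succ).det :=
      le_of_lt hP''pos
    -- h2b : (∑ j, P' 0 j) * det P'' ≤ det P'
    -- h1b : (∑ j, P 0 j) * det P' ≤ det P
    nlinarith [h1b, h2b, h2a, hq1, hq0, hP''nn, hr₁,
      mul_le_mul_of_nonneg_right hq1 hP''nn]
  exact hmain
end
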